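/- f(k,1) = R(k,k) - k for every k ≥ 2. That is, K_k is Ramsey-equivalent to K_k + f·K_1 (K_k plus f isolated vertices) if and only if f ≤ R(k,k) - k. -/

import Mathlib

/-- A monochromatic copy of `H` in `G` of colour `c` under the edge-colouring `χ`. -/
def MonoCopy {α β : Type*} (H : SimpleGraph α) (G : SimpleGraph β)
    (χ : β → β → Bool) (c : Bool) : Prop :=
  ∃ f : α ↪ β, (∀ a b, H.Adj a b → G.Adj (f a) (f b)) ∧
    ∀ a b, H.Adj a b → χ (f a) (f b) = c

/-- `G` is Ramsey for `H`: every symmetric 2-colouring of the edges of `G`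
contains a monochromatic copy of `H`. -/
def IsRamseyFor {α β : Type*} (H : SimpleGraph α) (G : SimpleGraph β) : Prop :=
  ∀ χ : β → β → Bool, (∀ x y, χ x y = χ y x) → ∃ c, MonoCopy H G χ c
/-- `H` and `H'` are Ramsey-equivalent: every graph is Ramsey for `H` iff it is for `H'`. -/
def RamseyEquiv {α β : Type*} (H : SimpleGraph α) (H' : SimpleGraph β) : Prop :=
  ∀ (n : ℕ) (G : SimpleGraph (Fin n)), IsRamseyFor H G ↔ IsRamseyFor H' G
/-- `K_k + f·K_t`: the disjoint union of `K_k` and `f` copies of `K_t`. -/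
def cliquesUnion (k f t : ℕ) : SimpleGraph (Fin k ⊕ Fin f × Fin t) :=
  SimpleGraph.fromRel (fun x y =>
    (∃ a b, x = Sum.inl a ∧ y = Sum.inl b) ∨
    (∃ i a b, x = Sum.inr (i, a) ∧ y = Sum.inr (i, b)))
/-- The (asymmetric) Ramsey number `R(k,s)`: the least `n` such that every symmetric
2-colouring of the complete graph on `n` vertices has a red `K_k` or a blue `K_s`. -/
noncomputable def ramsey2 (k s : ℕ) : ℕ :=
  sInf { n | ∀ χ : Fin n → Fin n → Bool, (∀ x y, χ x y = χ y x) →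
    (∃ S : Finset (Fin n), S.card = k ∧ ∀ x ∈ S, ∀ y ∈ S, x ≠ y → χ x y = true) ∨
    (∃ S : Finset (Fin n), S.card = s ∧ ∀ x ∈ S, ∀ y ∈ S, x ≠ y → χ x y = false) }

namespace RamseyAux

/-- An auxiliary Ramsey property over finite subsets of `ℕ`. -/
def RP (k s n : ℕ) : Prop :=
  ∀ (V : Finset ℕ) (χ : ℕ → ℕ → Bool), n ≤ V.card → (∀ x y, χ x y = χ y x) →
    (∃ S, S ⊆ V ∧ S.card = k ∧ ∀ x ∈ S, ∀ y ∈ S, x ≠ y → χ x y = true) ∨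
    (∃ S, S ⊆ V ∧ S.card = s ∧ ∀ x ∈ S, ∀ y ∈ S, x ≠ y → χ x y = false)

lemma rp_zero_left (s : ℕ) : RP 0 s 0 := fun V χ _ _ =>
  Or.inl ⟨∅, Finset.empty_subset _, Finset.card_empty, by simp⟩

lemma rp_zero_right (k : ℕ) : RP k 0 0 := fun V χ _ _ =>
  Or.inr ⟨∅, Finset.empty_subset _, Finset.card_empty, by simp⟩

lemma rp_step {k s n₁ n₂ : ℕ} (h₁ : RP k (s + 1) n₁) (h₂ : RP (k + 1) s n₂) :
    RP (k + 1) (s + 1) (n₁ + n₂ + 1) := by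
  intro V χ hcard hsym
  have hne : V.Nonempty := Finset.card_pos.mp (by omega)
  obtain ⟨v, hv⟩ := hne
  set W := V.erase v with hW
  have hWcard : W.card = V.card - 1 := Finset.card_erase_of_mem hv
  set A := W.filter (fun x => χ v x = true) with hA
  set B := W.filter (fun x => ¬ (χ v x = true)) with hB
  have hABcard : A.card + B.card = W.card := Finset.card_filter_add_card_filter_not _
  have hcases : n₁ ≤ A.card ∨ n₂ ≤ B.card := by omega
  rcases hcases with hAc | hBc
  · rcases h₁ A χ hAc hsym with ⟨S, hSA, hScard, hSmono⟩ | ⟨S, hSA, hScard, hSmono⟩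
    · -- red S of size k inside A; add v
      have hvS : v ∉ S := fun h => Finset.notMem_erase v V (Finset.mem_of_mem_filter v (hSA h))
      refine Or.inl ⟨insert v S, ?_, ?_, ?_⟩
      · intro x hx
        rcases Finset.mem_insert.mp hx with rfl | hx
        · exact hv
        · exact Finset.mem_of_mem_erase (Finset.mem_of_mem_filter x (hSA hx))
      · rw [Finset.card_insert_of_notMem hvS, hScard]
      · intro x hx y hy hxy
        have hred : ∀ z ∈ S, χ v z = true := fun z hz => (Finset.mem_filter.mp (hSA hz)).2
        rcases Finset.mem_insert.mp hx with hx0 | hxS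
        · rcases Finset.mem_insert.mp hy with hy0 | hyS
          · exact absurd (hx0.trans hy0.symm) hxy
          · rw [hx0]; exact hred y hyS
        · rcases Finset.mem_insert.mp hy with hy0 | hyS
          · rw [hy0, hsym]; exact hred x hxS
          · exact hSmono x hxS y hyS hxy
    · exact Or.inr ⟨S, fun x hx =>
        Finset.mem_of_mem_erase (Finset.mem_of_mem_filter x (hSA hx)), hScard, hSmono⟩
  · rcases h₂ B χ hBc hsym with ⟨S, hSB, hScard, hSmono⟩ | ⟨S, hSB, hScard, hSmono⟩
    · exact Or.inl ⟨S, fun x hx =>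
        Finset.mem_of_mem_erase (Finset.mem_of_mem_filter x (hSB hx)), hScard, hSmono⟩
    · have hvS : v ∉ S := fun h => Finset.notMem_erase v V (Finset.mem_of_mem_filter v (hSB h))
      refine Or.inr ⟨insert v S, ?_, ?_, ?_⟩
      · intro x hx
        rcases Finset.mem_insert.mp hx with rfl | hx
        · exact hv
        · exact Finset.mem_of_mem_erase (Finset.mem_of_mem_filter x (hSB hx))
      · rw [Finset.card_insert_of_notMem hvS, hScard]
      · intro x hx y hy hxy
        have hfalse : ∀ z ∈ S, χ v z = false := fun z hz => by
          have := (Finset.mem_filter.mp (hSB hz)).2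
          simpa using this
        rcases Finset.mem_insert.mp hx with hx0 | hxS
        · rcases Finset.mem_insert.mp hy with hy0 | hyS
          · exact absurd (hx0.trans hy0.symm) hxy
          · rw [hx0]; exact hfalse y hyS
        · rcases Finset.mem_insert.mp hy with hy0 | hyS
          · rw [hy0, hsym]; exact hfalse x hxS
          · exact hSmono x hxS y hyS hxy

lemma rp_exists : ∀ k s, ∃ n, RP k s n := by
  intro k
  induction k with
  | zero => exact fun s => ⟨0, rp_zero_left s⟩
  | succ k ihk =>
    intro s
    induction s with
    | zero => exact ⟨0, rp_zero_right (k + 1)⟩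
    | succ s ihs =>
      obtain ⟨n₁, hn₁⟩ := ihk (s + 1)
      obtain ⟨n₂, hn₂⟩ := ihs
      exact ⟨n₁ + n₂ + 1, rp_step hn₁ hn₂⟩

/-- The set whose infimum is `ramsey2 k s`. -/
def RSet (k s : ℕ) : Set ℕ :=
  { n | ∀ χ : Fin n → Fin n → Bool, (∀ x y, χ x y = χ y x) →
    (∃ S : Finset (Fin n), S.card = k ∧ ∀ x ∈ S, ∀ y ∈ S, x ≠ y → χ x y = true) ∨
    (∃ S : Finset (Fin n), S.card = s ∧ ∀ x ∈ S, ∀ y ∈ S, x ≠ y → χ x y = false) }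

lemma mem_rset_of_rp {k s n : ℕ} (h : RP k s n) : n ∈ RSet k s := by
  intro χ hsym
  set χ' : ℕ → ℕ → Bool := fun x y =>
    if hx : x < n then if hy : y < n then χ ⟨x, hx⟩ ⟨y, hy⟩ else true else true with hχ'
  have hsym' : ∀ x y, χ' x y = χ' y x := by
    intro x y
    simp only [hχ']
    split_ifs <;> first | rfl | exact hsym _ _
  have hlt : ∀ m ∈ Finset.range n, m < n := fun m hm => Finset.mem_range.mp hm
  rcases h (Finset.range n) χ' (by simp) hsym' with ⟨S, hSV, hScard, hSmono⟩ | ⟨S, hSV, hScard, hSmono⟩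
  · refine Or.inl ⟨S.attachFin (fun m hm => Finset.mem_range.mp (hSV hm)), ?_, ?_⟩
    · rw [Finset.card_attachFin]; exact hScard
    · intro x hx y hy hxy
      have hx' := (Finset.mem_attachFin _).mp hx
      have hy' := (Finset.mem_attachFin _).mp hy
      have := hSmono _ hx' _ hy' (fun h => hxy (Fin.val_injective h))
      rw [hχ'] at this
      simpa [x.isLt, y.isLt] using this
  · refine Or.inr ⟨S.attachFin (fun m hm => Finset.mem_range.mp (hSV hm)), ?_, ?_⟩
    · rw [Finset.card_attachFin]; exact hScard
    · intro x hx y hy hxy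
      have hx' := (Finset.mem_attachFin _).mp hx
      have hy' := (Finset.mem_attachFin _).mp hy
      have := hSmono _ hx' _ hy' (fun h => hxy (Fin.val_injective h))
      rw [hχ'] at this
      simpa [x.isLt, y.isLt] using this

lemma rset_nonempty (k s : ℕ) : (RSet k s).Nonempty := by
  obtain ⟨n, hn⟩ := rp_exists k s
  exact ⟨n, mem_rset_of_rp hn⟩

lemma ramsey2_mem (k s : ℕ) : ramsey2 k s ∈ RSet k s :=
  Nat.sInf_mem (rset_nonempty k s)

lemma k_le_of_mem_rset {k n : ℕ} (h : n ∈ RSet k k) : k ≤ n := by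
  rcases h (fun _ _ => true) (fun _ _ => rfl) with ⟨S, hScard, _⟩ | ⟨S, hScard, _⟩ <;>
    calc k = S.card := hScard.symm
      _ ≤ Fintype.card (Fin n) := Finset.card_le_univ S
      _ = n := Fintype.card_fin n

lemma k_le_ramsey2 (k : ℕ) : k ≤ ramsey2 k k :=
  k_le_of_mem_rset (ramsey2_mem k k)

lemma ramsey2_eq_sInf (k s : ℕ) : ramsey2 k s = sInf (RSet k s) := rfl

/-- Adjacency in `cliquesUnion k f 1`. -/
lemma cu_adj {k f : ℕ} {x y : Fin k ⊕ Fin f × Fin 1} :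
    (cliquesUnion k f 1).Adj x y ↔ ∃ a b, a ≠ b ∧ x = Sum.inl a ∧ y = Sum.inl b := by
  constructor
  · rintro ⟨hne, h | h⟩
    · rcases h with ⟨a, b, rfl, rfl⟩ | ⟨i, a, b, rfl, rfl⟩
      · exact ⟨a, b, fun h => hne (by rw [h]), rfl, rfl⟩
      · exact absurd (by rw [Subsingleton.elim a b]) hne
    · rcases h with ⟨a, b, rfl, rfl⟩ | ⟨i, a, b, rfl, rfl⟩
      · exact ⟨b, a, fun h => hne (by rw [h]), rfl, rfl⟩
      · exact absurd (by rw [Subsingleton.elim a b]) hne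
  · rintro ⟨a, b, hab, rfl, rfl⟩
    exact ⟨fun h => hab (Sum.inl_injective h), Or.inl (Or.inl ⟨a, b, rfl, rfl⟩)⟩

lemma monoCopy_cu_iff {k f n : ℕ} {G : SimpleGraph (Fin n)} {χ : Fin n → Fin n → Bool}
    {c : Bool} :
    MonoCopy (cliquesUnion k f 1) G χ c ↔
      MonoCopy (SimpleGraph.completeGraph (Fin k)) G χ c ∧ k + f ≤ n := by
  constructor
  · rintro ⟨g, hadj, hmono⟩
    refine ⟨⟨(Function.Embedding.inl).trans g, ?_, ?_⟩, ?_⟩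
    · intro a b hab
      exact hadj _ _ (cu_adj.mpr ⟨a, b, hab, rfl, rfl⟩)
    · intro a b hab
      exact hmono _ _ (cu_adj.mpr ⟨a, b, hab, rfl, rfl⟩)
    · have := Fintype.card_le_of_embedding g
      simpa using this
  · rintro ⟨⟨e, hadj, hmono⟩, hkf⟩
    set T : Finset (Fin n) := Finset.univ \ Finset.univ.map e with hT
    have hTcard : T.card = n - k := by
      rw [hT, Finset.card_sdiff_of_subset (Finset.subset_univ _)]
      simp
    have hcard' : Fintype.card (Fin f × Fin 1) ≤ Fintype.card {x // x ∈ T} := by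
      rw [Fintype.card_coe, hTcard]
      simp only [Fintype.card_prod, Fintype.card_fin]
      omega
    obtain ⟨u⟩ := Function.Embedding.nonempty_of_card_le hcard'
    have hginj : Function.Injective
        (Sum.elim (e : Fin k → Fin n) (fun p => ((u p : {x // x ∈ T}) : Fin n))) := by
      rintro (a | p) (b | q) h
      · simp only [Sum.elim_inl] at h
        rw [e.injective h]
      · exfalso
        simp only [Sum.elim_inl, Sum.elim_inr] at h
        have : ((u q : {x // x ∈ T}) : Fin n) ∈ T := (u q).2
        rw [← h, hT, Finset.mem_sdiff] at this
        exact this.2 (Finset.mem_map_of_mem e (Finset.mem_univ a))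
      · exfalso
        simp only [Sum.elim_inl, Sum.elim_inr] at h
        have : ((u p : {x // x ∈ T}) : Fin n) ∈ T := (u p).2
        rw [h, hT, Finset.mem_sdiff] at this
        exact this.2 (Finset.mem_map_of_mem e (Finset.mem_univ b))
      · simp only [Sum.elim_inr] at h
        rw [u.injective (Subtype.val_injective h)]
    refine ⟨⟨_, hginj⟩, ?_, ?_⟩
    · intro x y hxy
      obtain ⟨a, b, hab, rfl, rfl⟩ := cu_adj.mp hxy
      exact hadj a b hab
    · intro x y hxy
      obtain ⟨a, b, hab, rfl, rfl⟩ := cu_adj.mp hxy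
      exact hmono a b hab

lemma mem_rset_of_ramseyFor {k n : ℕ} {G : SimpleGraph (Fin n)}
    (h : IsRamseyFor (SimpleGraph.completeGraph (Fin k)) G) : n ∈ RSet k k := by
  intro χ hsym
  obtain ⟨c, e, hadj, hmono⟩ := h χ hsym
  have key : ∀ x ∈ Finset.univ.map e, ∀ y ∈ Finset.univ.map e, x ≠ y → χ x y = c := by
    intro x hx y hy hxy
    obtain ⟨a, _, rfl⟩ := Finset.mem_map.mp hx
    obtain ⟨b, _, rfl⟩ := Finset.mem_map.mp hy
    exact hmono a b (fun h => hxy (by rw [h]))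
  have hcard : (Finset.univ.map e).card = k := by simp
  cases c with
  | true => exact Or.inl ⟨Finset.univ.map e, hcard, key⟩
  | false => exact Or.inr ⟨Finset.univ.map e, hcard, key⟩

lemma ramseyFor_top_of_mem_rset {k n : ℕ} (h : n ∈ RSet k k) :
    IsRamseyFor (SimpleGraph.completeGraph (Fin k)) (SimpleGraph.completeGraph (Fin n)) := by
  intro χ hsym
  rcases h χ hsym with ⟨S, hScard, hSmono⟩ | ⟨S, hScard, hSmono⟩
  · refine ⟨true, (S.orderEmbOfFin hScard).toEmbedding, ?_, ?_⟩
    · intro a b hab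
      exact fun h => hab ((S.orderEmbOfFin hScard).injective h)
    · intro a b hab
      have hab' : a ≠ b := hab
      exact hSmono _ (S.orderEmbOfFin_mem hScard a) _ (S.orderEmbOfFin_mem hScard b)
        (fun h => hab' ((S.orderEmbOfFin hScard).injective h))
  · refine ⟨false, (S.orderEmbOfFin hScard).toEmbedding, ?_, ?_⟩
    · intro a b hab
      exact fun h => hab ((S.orderEmbOfFin hScard).injective h)
    · intro a b hab
      have hab' : a ≠ b := hab
      exact hSmono _ (S.orderEmbOfFin_mem hScard a) _ (S.orderEmbOfFin_mem hScard b)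
        (fun h => hab' ((S.orderEmbOfFin hScard).injective h))

lemma card_le_of_ramseyFor_cu {k f n : ℕ} {G : SimpleGraph (Fin n)}
    (h : IsRamseyFor (cliquesUnion k f 1) G) : k + f ≤ n := by
  obtain ⟨c, hc⟩ := h (fun _ _ => true) (fun _ _ => rfl)
  exact (monoCopy_cu_iff.mp hc).2

end RamseyAux

/-- `f(k,1) = R(k,k) - k`: the graph `K_k + f·K_1` (a `K_k` plus `f` isolated vertices)
is Ramsey-equivalent to `K_k` if and only if `f ≤ R(k,k) - k`. -/
theorem ramseyEquiv_clique_add_isolated_iff (k : ℕ) (hk : 2 ≤ k) (f : ℕ) :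
    RamseyEquiv (SimpleGraph.completeGraph (Fin k)) (cliquesUnion k f 1) ↔ f ≤ ramsey2 k k - k := by
  open RamseyAux in
  have hkR : k ≤ ramsey2 k k := k_le_ramsey2 k
  constructor
  · intro hEquiv
    have hKR : IsRamseyFor (SimpleGraph.completeGraph (Fin k))
        (SimpleGraph.completeGraph (Fin (ramsey2 k k))) := ramseyFor_top_of_mem_rset (ramsey2_mem k k)
    have hH' := (hEquiv (ramsey2 k k) (SimpleGraph.completeGraph _)).mp hKR
    have := card_le_of_ramseyFor_cu hH'
    omega
  · intro hf n G
    constructor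
    · intro hK
      have hn : ramsey2 k k ≤ n := Nat.sInf_le (mem_rset_of_ramseyFor hK)
      have hkfn : k + f ≤ n := by omega
      intro χ hsym
      obtain ⟨c, hc⟩ := hK χ hsym
      exact ⟨c, monoCopy_cu_iff.mpr ⟨hc, hkfn⟩⟩
    · intro hH' χ hsym
      obtain ⟨c, hc⟩ := hH' χ hsym
      exact ⟨c, (monoCopy_cu_iff.mp hc).1⟩
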